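/- Let H be a complex Hilbert space, let V and W be closed subspaces of H, and let ε ∈ (0,1] be such that |⟨v,w⟩| ≤ (1−ε)‖v‖‖w‖ for all v ∈ V and w ∈ W. Then for all v ∈ V and w ∈ W one has ε(2−ε)‖v‖² ≤ ‖v + w‖². Consequently, if V + W = H, the bounded idempotent e with range V and kernel W satisfies ‖e‖ ≤ 1/√(ε(2−ε)). -/

import Mathlib

local notation "⟪" x ", " y "⟫" => @inner ℂ _ _ x y

/-- The quantitative 'moreover' clause of Lemma 4.1: if `|⟨v,w⟩| ≤ (1-ε)‖v‖‖w‖` for all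
`v ∈ V`, `w ∈ W`, then `ε(2−ε)‖v‖² ≤ ‖v + w‖²`; consequently, if `V + W = H`, the bounded
idempotent `e` with range `V` and kernel `W` satisfies `‖e‖ ≤ 1/√(ε(2−ε))`. -/
theorem idempotent_norm_bound_of_angle
    {H : Type*} [NormedAddCommGroup H] [InnerProductSpace ℂ H] [CompleteSpace H]
    (V W : Submodule ℂ H) (hV : IsClosed (V : Set H)) (hW : IsClosed (W : Set H))
    (ε : ℝ) (hε : ε ∈ Set.Ioc (0 : ℝ) 1)
    (hangle : ∀ v ∈ V, ∀ w ∈ W, ‖⟪v, w⟫‖ ≤ (1 - ε) * ‖v‖ * ‖w‖) :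
    (∀ v ∈ V, ∀ w ∈ W, ε * (2 - ε) * ‖v‖ ^ 2 ≤ ‖v + w‖ ^ 2) ∧
    ((∀ x : H, ∃ v ∈ V, ∃ w ∈ W, x = v + w) →
      ∀ e : H →L[ℂ] H, e.comp e = e → LinearMap.range (e : H →ₗ[ℂ] H) = V → LinearMap.ker (e : H →ₗ[ℂ] H) = W →
        ‖e‖ ≤ 1 / Real.sqrt (ε * (2 - ε))) := by
  obtain ⟨hε0, hε1⟩ := hε
  have key : ∀ v ∈ V, ∀ w ∈ W, ε * (2 - ε) * ‖v‖ ^ 2 ≤ ‖v + w‖ ^ 2 := by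
    intro v hv w hw
    have hsq : ‖v + w‖ ^ 2 = ‖v‖ ^ 2 + 2 * Complex.re ⟪v, w⟫ + ‖w‖ ^ 2 :=
      norm_add_sq (𝕜 := ℂ) v w
    have hre : -‖⟪v, w⟫‖ ≤ Complex.re ⟪v, w⟫ := by
      have := abs_le.mp (Complex.abs_re_le_norm ⟪v, w⟫)
      simpa using this.1
    have hab := hangle v hv w hw
    have h1 : -((1 - ε) * ‖v‖ * ‖w‖) ≤ Complex.re ⟪v, w⟫ := by linarith
    nlinarith [sq_nonneg (‖w‖ - (1 - ε) * ‖v‖), sq_nonneg (‖v‖ + ‖w‖)]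
  refine ⟨key, ?_⟩
  intro _hsum e he hrange hker
  have hc : 0 < ε * (2 - ε) := by nlinarith
  have hsc : 0 < Real.sqrt (ε * (2 - ε)) := Real.sqrt_pos.mpr hc
  apply ContinuousLinearMap.opNorm_le_bound
  · positivity
  · intro x
    have hv : e x ∈ V := hrange ▸ LinearMap.mem_range_self e.toLinearMap x
    have hw : x - e x ∈ W := by
      rw [← hker]
      simp only [LinearMap.mem_ker]
      have : e (e x) = e x := by
        have := congrArg (fun f : H →L[ℂ] H => f x) he
        simpa using this
      simp [map_sub, this]
    have h2 := key (e x) hv (x - e x) hw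
    rw [show e x + (x - e x) = x by abel] at h2
    -- from ε(2-ε)‖e x‖² ≤ ‖x‖² conclude
    have hns : Real.sqrt (ε * (2 - ε)) * ‖e x‖ ≤ ‖x‖ := by
      have hsq : (Real.sqrt (ε * (2 - ε)) * ‖e x‖) ^ 2 ≤ ‖x‖ ^ 2 := by
        rw [mul_pow, Real.sq_sqrt hc.le]; exact h2
      have h0 : 0 ≤ Real.sqrt (ε * (2 - ε)) * ‖e x‖ := by positivity
      nlinarith [norm_nonneg x]
    rw [div_mul_eq_mul_div, one_mul, le_div_iff₀ hsc]
    linarith [hns]
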